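/- Graphical representation of the two point function: for every N ∈ ℕ, every β ∈ ℝ, every symmetric array of real numbers (g_{ij})_{1≤i,j≤N} with g_{ii} = 0, and all i ≠ j in [N], the Gibbs two point function satisfies ⟨σ_i σ_j⟩ = tanh(β g_{ij}) + (1 − tanh²(β g_{ij})) · Ẑ_N^{-1} · Σ_{γ∈Γ_sc : {i,j}∈E_γ} ∏_{e∈E_γ, e≠{i,j}} tanh(β g_e), where Ẑ_N = Σ_{γ∈Γ_sc} w(γ); moreover ⟨σ_i σ_i⟩ = 1 for all i. -/

import Mathlib

open MeasureTheory ProbabilityTheory Filter Topology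
open scoped NNReal ENNReal

namespace SK

/-- Edges are ordered pairs `(u, v)` with `u < v`. -/
abbrev Edge (N : ℕ) := Fin N × Fin N

variable {N : ℕ}

/-- An edge set determines a simple graph if every edge is an increasing pair. -/
def IsGraph (E : Finset (Edge N)) : Prop := ∀ e ∈ E, e.1 < e.2

/-- Degree of a vertex: the number of edges containing it. -/
def degree (E : Finset (Edge N)) (v : Fin N) : ℕ :=
  (E.filter fun e => e.1 = v ∨ e.2 = v).card

/-- Vertex set of a graph given by an edge set (no isolated vertices). -/
def verts (E : Finset (Edge N)) : Finset (Fin N) :=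
  Finset.univ.filter fun v => 0 < degree E v

/-- The simple graph associated to an edge set. -/
def toSG (E : Finset (Edge N)) : SimpleGraph (Fin N) where
  Adj u v := u ≠ v ∧ ((u, v) ∈ E ∨ (v, u) ∈ E)
  symm := ⟨fun _ _ h => ⟨h.1.symm, h.2.symm⟩⟩
  loopless := ⟨fun _ h => h.1 rfl⟩

/-- Connectivity of the graph induced on its vertex set. -/
def GConnected (E : Finset (Edge N)) : Prop :=
  ∀ u ∈ verts E, ∀ v ∈ verts E, (toSG E).Reachable u v

/-- Simple closed graph: every vertex has even degree (member of `Γ_sc`;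
the empty graph is allowed). -/
def IsClosed (E : Finset (Edge N)) : Prop :=
  IsGraph E ∧ ∀ v, Even (degree E v)

/-- Cycle (simple loop, member of `Γ_loop`): connected with all degrees equal to two. -/
def IsCycle (E : Finset (Edge N)) : Prop :=
  IsGraph E ∧ E.Nonempty ∧ GConnected E ∧ ∀ v ∈ verts E, degree E v = 2

/-- Self-avoiding path from `i` to `j` (member of `Γ_p^{ij}`): connected, exactly the two
vertices `i ≠ j` have degree one, and all other vertices have degree two. -/
def IsPath (i j : Fin N) (E : Finset (Edge N)) : Prop :=
  IsGraph E ∧ i ≠ j ∧ GConnected E ∧ i ∈ verts E ∧ j ∈ verts E ∧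
    degree E i = 1 ∧ degree E j = 1 ∧ ∀ v ∈ verts E, v ≠ i → v ≠ j → degree E v = 2

/-- The edge `{i, j}` as an ordered pair. -/
def mkEdge (i j : Fin N) : Edge N := if i < j then (i, j) else (j, i)

/-- Weight of a graph: `w(γ) = ∏_{e ∈ γ} tanh(β g_e)`, with `w(∅) = 1`. -/
noncomputable def wt (β : ℝ) (g : Fin N → Fin N → ℝ) (E : Finset (Edge N)) : ℝ :=
  ∏ e ∈ E, Real.tanh (β * g e.1 e.2)

/-- Polynomial weight of a graph: `∏_{e ∈ γ} β g_e`. -/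
noncomputable def pwt (β : ℝ) (g : Fin N → Fin N → ℝ) (E : Finset (Edge N)) : ℝ :=
  ∏ e ∈ E, β * g e.1 e.2

/-- Spin value of a Boolean configuration entry. -/
def spin (b : Bool) : ℝ := if b then 1 else -1

/-- The set of increasing pairs `i < j`. -/
def pairs (N : ℕ) : Finset (Edge N) := Finset.univ.filter fun e => e.1 < e.2

/-- SK Hamiltonian `H_N(σ) = β ∑_{i<j} g_{ij} σ_i σ_j`. -/
noncomputable def hamil (β : ℝ) (g : Fin N → Fin N → ℝ) (σ : Fin N → ℝ) : ℝ :=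
  β * ∑ e ∈ pairs N, g e.1 e.2 * σ e.1 * σ e.2

/-- Gibbs expectation `⟨f⟩`. -/
noncomputable def gibbs (β : ℝ) (g : Fin N → Fin N → ℝ) (f : (Fin N → ℝ) → ℝ) : ℝ :=
  (∑ s : Fin N → Bool, f (fun i => spin (s i)) * Real.exp (hamil β g fun i => spin (s i))) /
    ∑ s : Fin N → Bool, Real.exp (hamil β g fun i => spin (s i))

/-- Two point correlation matrix `M = (⟨σ_i σ_j⟩)`. -/
noncomputable def Mmat (β : ℝ) (g : Fin N → Fin N → ℝ) : Matrix (Fin N) (Fin N) ℝ :=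
  Matrix.of fun i j => gibbs β g fun σ => σ i * σ j

/-- Self-avoiding path matrix `P`: `p_{ii} = 1` and
`p_{ij} = ∑_{γ ∈ Γ_p^{ij}} ∏_{e ∈ γ} β g_e` for `i ≠ j`. -/
noncomputable def Pmat (β : ℝ) (g : Fin N → Fin N → ℝ) : Matrix (Fin N) (Fin N) ℝ :=
  Matrix.of fun i j =>
    if i = j then 1 else ∑ᶠ E ∈ {E : Finset (Edge N) | IsPath i j E}, pwt β g E

/-- Frobenius (Hilbert–Schmidt) norm of a matrix. -/
noncomputable def frobNorm (A : Matrix (Fin N) (Fin N) ℝ) : ℝ :=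
  Real.sqrt (∑ i, ∑ j, A i j ^ 2)

/-- Euclidean operator norm of a matrix: `sup_{‖v‖ = 1} ‖A v‖`. -/
noncomputable def opNorm (A : Matrix (Fin N) (Fin N) ℝ) : ℝ :=
  sSup {r : ℝ | ∃ v : Fin N → ℝ, ∑ i, v i ^ 2 = 1 ∧ r = Real.sqrt (∑ i, A.mulVec v i ^ 2)}

/-- The resolvent `((1 + β²)·id - βG)⁻¹`. -/
noncomputable def resolvent (β : ℝ) (G : Matrix (Fin N) (Fin N) ℝ) : Matrix (Fin N) (Fin N) ℝ :=
  ((1 + β ^ 2) • (1 : Matrix (Fin N) (Fin N) ℝ) - β • G)⁻¹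

/-- Large graph threshold `k_N = (log N)^{3/2}`. -/
noncomputable def kN (N : ℕ) : ℝ := Real.log N ^ (3 / 2 : ℝ)

/-- `E` is an edge-disjoint union of self-avoiding paths with endpoints in `W`. -/
def IsPathUnion (W : Finset (Fin N)) (E : Finset (Edge N)) : Prop :=
  ∃ (k : ℕ) (p : Fin k → Finset (Edge N)) (a b : Fin k → Fin N),
    (∀ t, IsPath (a t) (b t) (p t)) ∧ (∀ t, a t ∈ W ∧ b t ∈ W) ∧
    (∀ s t, s ≠ t → Disjoint (p s) (p t)) ∧ E = Finset.univ.biUnion p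

/-- Relabeling of a graph by a permutation of the vertices. -/
def relabel (π : Equiv.Perm (Fin N)) (E : Finset (Edge N)) : Finset (Edge N) :=
  E.image fun e => mkEdge (π e.1) (π e.2)

/-- Two graphs on the same vertex set are isomorphic if one is a relabeling of the other. -/
def Isomorphic (E E' : Finset (Edge N)) : Prop :=
  ∃ π : Equiv.Perm (Fin N), relabel π E = E'

/-- The set `T_{η₁}^{ij}` of multiplicity-two graphs `ψ₂(γ∘τ) = γ ∩ τ` arising from pairs
`(γ, τ) ∈ S_{η₁}^{ij}`, i.e. `γ ∈ Γ_loop`, `τ ∈ Γ_sc`, `{i,j} ∈ γ`, `|V_γ ∩ V_τ| ≥ 2`,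
`|γ| < c` and `ψ₁(γ∘τ) = η₁`. -/
def Tset (N : ℕ) (c : ℝ) (i j : Fin N) (η₁ : Finset (Edge N)) : Set (Finset (Edge N)) :=
  {η₂ | ∃ γ τ : Finset (Edge N), IsCycle γ ∧ IsClosed τ ∧ mkEdge i j ∈ γ ∧
    2 ≤ (verts γ ∩ verts τ).card ∧ (γ.card : ℝ) < c ∧
    (γ ∪ τ) \ (γ ∩ τ) = η₁ ∧ γ ∩ τ = η₂}

/-- The coupling hypotheses of the SK model: `(g_{ij})_{i<j}` are independent centered
Gaussian random variables of variance `1/N`, extended symmetrically with `g_{ii} = 0`. -/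
def IsSKCoupling (N : ℕ) {Ω : Type} [MeasureSpace Ω] (g : Ω → Fin N → Fin N → ℝ) : Prop :=
  IsProbabilityMeasure (ℙ : Measure Ω) ∧
    (∀ i j, Measurable fun ω => g ω i j) ∧
    (∀ ω i j, g ω j i = g ω i j) ∧
    (∀ ω i, g ω i i = 0) ∧
    (∀ i j : Fin N, i < j →
      Measure.map (fun ω => g ω i j) ℙ = gaussianReal 0 (N : ℝ≥0)⁻¹) ∧
    iIndepFun
      (fun (e : {e : Edge N // e.1 < e.2}) ω => g ω e.1.1 e.1.2) ℙ


section Expansion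

open Finset

variable {N : ℕ}

private lemma spin_eq (b : Bool) : spin b = 1 ∨ spin b = -1 := by
  cases b <;> simp [spin]

private lemma spin_mul_self (b : Bool) : spin b * spin b = 1 := by
  cases b <;> norm_num [spin]

private lemma sum_spin_pow (k : ℕ) :
    ∑ b : Bool, spin b ^ k = if Even k then (2 : ℝ) else 0 := by
  rw [Fintype.sum_bool]
  rcases Nat.even_or_odd k with h | h
  · simp [spin, h, h.neg_one_pow]; norm_num
  · simp [spin, h.neg_one_pow, Nat.not_even_iff_odd.mpr h]

private lemma sum_prod_spin_pow (d : Fin N → ℕ) :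
    ∑ s : Fin N → Bool, ∏ v, spin (s v) ^ d v =
      if ∀ v, Even (d v) then (2 : ℝ) ^ N else 0 := by
  rw [← Fintype.prod_sum (fun v b => spin b ^ d v)]
  simp only [sum_spin_pow]
  by_cases h : ∀ v, Even (d v)
  · rw [if_pos h]
    rw [Finset.prod_congr rfl (fun v _ => if_pos (h v))]
    simp
  · rw [if_neg h]
    push_neg at h
    obtain ⟨v, hv⟩ := h
    exact Finset.prod_eq_zero (mem_univ v) (by simp [hv])

private lemma degree_eq_sum (E : Finset (Edge N)) (v : Fin N) :
    degree E v = ∑ e ∈ E, if e.1 = v ∨ e.2 = v then 1 else 0 :=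
  Finset.card_filter ..

private lemma prod_edge_spin (σ : Fin N → ℝ) (E : Finset (Edge N))
    (hE : ∀ e ∈ E, e.1 ≠ e.2) :
    ∏ e ∈ E, σ e.1 * σ e.2 = ∏ v, σ v ^ degree E v := by
  have inner : ∀ e ∈ E, σ e.1 * σ e.2 =
      ∏ v, σ v ^ (if e.1 = v ∨ e.2 = v then 1 else 0) := by
    intro e he
    have h1 : ∀ v : Fin N, σ v ^ (if e.1 = v ∨ e.2 = v then 1 else 0) =
        if v ∈ ({e.1, e.2} : Finset (Fin N)) then σ v else 1 := by
      intro v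
      by_cases h : e.1 = v ∨ e.2 = v
      · rw [if_pos h, pow_one, if_pos (by simp [mem_insert, mem_singleton]; tauto)]
      · rw [if_neg h, pow_zero, if_neg (by simp [mem_insert, mem_singleton]; tauto)]
    rw [Finset.prod_congr rfl (fun v _ => h1 v), Finset.prod_ite_mem, Finset.univ_inter,
      Finset.prod_pair (hE e he)]
  rw [Finset.prod_congr rfl inner, Finset.prod_comm]
  exact Finset.prod_congr rfl fun v _ => by
    rw [Finset.prod_pow_eq_pow_sum, ← degree_eq_sum]

private lemma mem_pairs (e : Edge N) : e ∈ pairs N ↔ e.1 < e.2 := by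
  simp [pairs]

private lemma exp_eq_cosh_mul (a x : ℝ) (hx : x = 1 ∨ x = -1) :
    Real.exp (a * x) = Real.cosh a * (1 + Real.tanh a * x) := by
  have hc := (Real.cosh_pos a).ne'
  rcases hx with h | h <;> subst h <;> rw [Real.tanh_eq_sinh_div_cosh] <;> field_simp
  all_goals linarith [Real.cosh_sub_sinh a, Real.cosh_add_sinh a]

private lemma exp_hamil_expand (β : ℝ) (g : Fin N → Fin N → ℝ) (s : Fin N → Bool) :
    Real.exp (hamil β g fun v => spin (s v)) =
      (∏ e ∈ pairs N, Real.cosh (β * g e.1 e.2)) *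
        ∑ E ∈ (pairs N).powerset, wt β g E * ∏ v, spin (s v) ^ degree E v := by
  have hx : ∀ u v : Fin N, spin (s u) * spin (s v) = 1 ∨ spin (s u) * spin (s v) = -1 := by
    intro u v
    rcases spin_eq (s u) with h | h <;> rcases spin_eq (s v) with h' | h' <;>
      rw [h, h'] <;> norm_num
  have step1 : Real.exp (hamil β g fun v => spin (s v)) =
      ∏ e ∈ pairs N, Real.cosh (β * g e.1 e.2) *
        (1 + Real.tanh (β * g e.1 e.2) * (spin (s e.1) * spin (s e.2))) := by
    rw [hamil, Finset.mul_sum, Real.exp_sum]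
    refine Finset.prod_congr rfl fun e _ => ?_
    have := exp_eq_cosh_mul (β * g e.1 e.2) (spin (s e.1) * spin (s e.2)) (hx e.1 e.2)
    rw [← this]; ring_nf
  rw [step1, Finset.prod_mul_distrib]
  congr 1
  have step2 : ∀ e ∈ pairs N,
      1 + Real.tanh (β * g e.1 e.2) * (spin (s e.1) * spin (s e.2)) =
      (Real.tanh (β * g e.1 e.2) * (spin (s e.1) * spin (s e.2))) + 1 := fun e _ => by ring
  rw [Finset.prod_congr rfl step2, Finset.prod_add]
  refine Finset.sum_congr rfl fun E hE => ?_
  rw [Finset.prod_const_one, mul_one]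
  have hsub : ∀ e ∈ E, e.1 ≠ e.2 := fun e he =>
    ne_of_lt ((mem_pairs e).1 (Finset.mem_powerset.1 hE he))
  rw [Finset.prod_mul_distrib, wt]
  congr 1
  exact prod_edge_spin (fun v => spin (s v)) E hsub

end Expansion


section Sums

open Finset

variable {N : ℕ}

private lemma even_addc (a c : ℕ) : Even (a + c + c) ↔ Even a := by
  rw [add_assoc, Nat.even_add]
  simp [Even.add_self c]

private lemma prod_spin_ind (s : Fin N → Bool) (i j : Fin N) (hij : i ≠ j) :
    ∏ v, spin (s v) ^ (if v = i ∨ v = j then 1 else 0) = spin (s i) * spin (s j) := by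
  have h1 : ∀ v : Fin N, spin (s v) ^ (if v = i ∨ v = j then 1 else 0) =
      if v ∈ ({i, j} : Finset (Fin N)) then spin (s v) else 1 := by
    intro v; by_cases h : v = i ∨ v = j
    · rw [if_pos h, pow_one, if_pos (by simp [h])]
    · rw [if_neg h, pow_zero, if_neg (by simp only [mem_insert, mem_singleton]; tauto)]
  rw [Finset.prod_congr rfl (fun v _ => h1 v), Finset.prod_ite_mem, Finset.univ_inter,
    Finset.prod_pair hij]

private lemma sum_wt_ite (β : ℝ) (g : Fin N → Fin N → ℝ) (P : Finset (Edge N) → Prop)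
    [DecidablePred P] :
    ∑ E ∈ (pairs N).powerset, wt β g E * (if P E then (2:ℝ)^N else 0) =
      (2:ℝ)^N * ∑ E ∈ (pairs N).powerset.filter P, wt β g E := by
  rw [Finset.mul_sum, Finset.sum_filter]
  refine Finset.sum_congr rfl fun E _ => ?_
  by_cases h : P E <;> simp [h, mul_comm]

private lemma denom_expand (β : ℝ) (g : Fin N → Fin N → ℝ) :
    ∑ s : Fin N → Bool, Real.exp (hamil β g fun v => spin (s v)) =
      ((∏ e ∈ pairs N, Real.cosh (β * g e.1 e.2)) * 2 ^ N) *
        ∑ E ∈ (pairs N).powerset.filter (fun E => ∀ v, Even (degree E v)), wt β g E := by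
  rw [Finset.sum_congr rfl fun s _ => exp_hamil_expand β g s, ← Finset.mul_sum,
    Finset.sum_comm]
  have inner : ∀ E ∈ (pairs N).powerset,
      (∑ s : Fin N → Bool, wt β g E * ∏ v, spin (s v) ^ degree E v) =
      wt β g E * (if (∀ v, Even (degree E v)) then (2:ℝ)^N else 0) := by
    intro E _
    rw [← Finset.mul_sum, sum_prod_spin_pow]
  rw [Finset.sum_congr rfl inner, sum_wt_ite, ← mul_assoc]

private lemma numer_expand (β : ℝ) (g : Fin N → Fin N → ℝ) (i j : Fin N) (hij : i ≠ j) :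
    ∑ s : Fin N → Bool,
        spin (s i) * spin (s j) * Real.exp (hamil β g fun v => spin (s v)) =
      ((∏ e ∈ pairs N, Real.cosh (β * g e.1 e.2)) * 2 ^ N) *
        ∑ E ∈ (pairs N).powerset.filter
            (fun E => ∀ v, Even (degree E v + (if v = i ∨ v = j then 1 else 0))),
          wt β g E := by
  have comb : ∀ (s : Fin N → Bool) (E : Finset (Edge N)),
      spin (s i) * spin (s j) * ∏ v, spin (s v) ^ degree E v =
      ∏ v, spin (s v) ^ (degree E v + (if v = i ∨ v = j then 1 else 0)) := by
    intro s E
    simp only [pow_add]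
    rw [Finset.prod_mul_distrib, prod_spin_ind s i j hij]
    ring
  have step : ∀ s : Fin N → Bool,
      spin (s i) * spin (s j) * Real.exp (hamil β g fun v => spin (s v)) =
      (∏ e ∈ pairs N, Real.cosh (β * g e.1 e.2)) *
        ∑ E ∈ (pairs N).powerset,
          wt β g E * ∏ v, spin (s v) ^ (degree E v + (if v = i ∨ v = j then 1 else 0)) := by
    intro s
    rw [exp_hamil_expand β g s, mul_comm (spin (s i) * spin (s j)), mul_assoc,
      Finset.sum_mul]
    congr 1
    refine Finset.sum_congr rfl fun E _ => ?_
    rw [mul_assoc, mul_comm (∏ v, spin (s v) ^ degree E v), comb s E]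
  rw [Finset.sum_congr rfl fun s _ => step s, ← Finset.mul_sum, Finset.sum_comm]
  have inner : ∀ E ∈ (pairs N).powerset,
      (∑ s : Fin N → Bool,
          wt β g E * ∏ v, spin (s v) ^ (degree E v + (if v = i ∨ v = j then 1 else 0))) =
      wt β g E *
        (if (∀ v, Even (degree E v + (if v = i ∨ v = j then 1 else 0))) then (2:ℝ)^N else 0) := by
    intro E _
    rw [← Finset.mul_sum, sum_prod_spin_pow]
  rw [Finset.sum_congr rfl inner, sum_wt_ite, ← mul_assoc]

private lemma mkEdge_mem_pairs (i j : Fin N) (hij : i ≠ j) : mkEdge i j ∈ pairs N := by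
  rw [mem_pairs, mkEdge]
  rcases lt_or_gt_of_ne hij with h | h
  · rw [if_pos h]; exact h
  · rw [if_neg (not_lt_of_gt h)]; exact h

private lemma mkEdge_incident (i j v : Fin N) :
    ((mkEdge i j).1 = v ∨ (mkEdge i j).2 = v) ↔ (v = i ∨ v = j) := by
  rw [mkEdge]; split_ifs <;> simp [eq_comm] <;> tauto

private lemma g_mkEdge (g : Fin N → Fin N → ℝ) (hsym : ∀ i j, g j i = g i j) (i j : Fin N) :
    g (mkEdge i j).1 (mkEdge i j).2 = g i j := by
  rw [mkEdge]; split_ifs <;> simp [hsym]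

private lemma degree_insert (e0 : Edge N) (E : Finset (Edge N)) (h : e0 ∉ E) (v : Fin N) :
    degree (insert e0 E) v = degree E v + (if e0.1 = v ∨ e0.2 = v then 1 else 0) := by
  simp only [degree_eq_sum, Finset.sum_insert h]
  rw [add_comm]

private lemma degree_insert_mk (i j : Fin N) (E : Finset (Edge N)) (h : mkEdge i j ∉ E)
    (v : Fin N) :
    degree (insert (mkEdge i j) E) v = degree E v + (if v = i ∨ v = j then 1 else 0) := by
  rw [degree_insert _ _ h]
  congr 1
  simp only [mkEdge_incident]

private lemma finsum_mem_setOf (p : Finset (Edge N) → Prop) [DecidablePred p]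
    (f : Finset (Edge N) → ℝ) :
    ∑ᶠ E ∈ {E : Finset (Edge N) | p E}, f E = ∑ E ∈ Finset.univ.filter p, f E := by
  rw [← finsum_mem_coe_finset]
  congr 1
  ext E; simp

end Sums


section Main

open Finset

variable {N : ℕ}

private lemma denom_pos (β : ℝ) (g : Fin N → Fin N → ℝ) :
    (0:ℝ) < ∑ s : Fin N → Bool, Real.exp (hamil β g fun v => spin (s v)) :=
  Finset.sum_pos (fun s _ => Real.exp_pos _) Finset.univ_nonempty

private lemma diag_one (β : ℝ) (g : Fin N → Fin N → ℝ) (i : Fin N) :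
    Mmat β g i i = 1 := by
  rw [Mmat, Matrix.of_apply, gibbs]
  have h1 : ∀ s : Fin N → Bool,
      ((fun σ : Fin N → ℝ => σ i * σ i) fun v => spin (s v)) *
        Real.exp (hamil β g fun v => spin (s v)) =
      Real.exp (hamil β g fun v => spin (s v)) := by
    intro s
    simp only [spin_mul_self, one_mul]
  rw [Finset.sum_congr rfl fun s _ => h1 s]
  exact div_self (ne_of_gt (denom_pos β g))

private lemma wt_fact (β : ℝ) (g : Fin N → Fin N → ℝ) (hsym : ∀ i j, g j i = g i j)
    (i j : Fin N) (F : Finset (Edge N)) (hF : mkEdge i j ∈ F) :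
    wt β g F = Real.tanh (β * g i j) * wt β g (F.erase (mkEdge i j)) := by
  rw [wt, wt, ← Finset.mul_prod_erase F _ hF, g_mkEdge g hsym i j]

private lemma B1 (β : ℝ) (g : Fin N → Fin N → ℝ) (hsym : ∀ i j, g j i = g i j)
    (i j : Fin N) (hij : i ≠ j) :
    ∑ E ∈ ((pairs N).powerset.filter
        (fun E => ∀ v, Even (degree E v + (if v = i ∨ v = j then 1 else 0)))).filter
        (fun E => mkEdge i j ∈ E), wt β g E
      = ∑ F ∈ ((pairs N).powerset.filter
            (fun E => ∀ v, Even (degree E v))).filter (fun F => mkEdge i j ∉ F),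
          Real.tanh (β * g i j) * wt β g F := by
  refine Finset.sum_bij' (fun E _ => E.erase (mkEdge i j)) (fun F _ => insert (mkEdge i j) F)
    ?_ ?_ ?_ ?_ ?_
  · intro E hE
    simp only [Finset.mem_filter, Finset.mem_powerset] at hE ⊢
    obtain ⟨⟨hsub, hpar⟩, hmem⟩ := hE
    refine ⟨⟨(Finset.erase_subset _ _).trans hsub, ?_⟩, Finset.notMem_erase _ _⟩
    intro v
    have hdeg := degree_insert_mk i j (E.erase (mkEdge i j)) (Finset.notMem_erase _ _) v
    rw [Finset.insert_erase hmem] at hdeg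
    have hp := hpar v
    rw [hdeg] at hp
    exact (even_addc _ _).1 hp
  · intro F hF
    simp only [Finset.mem_filter, Finset.mem_powerset] at hF ⊢
    obtain ⟨⟨hsub, hpar⟩, hnm⟩ := hF
    refine ⟨⟨Finset.insert_subset (mkEdge_mem_pairs i j hij) hsub, ?_⟩,
      Finset.mem_insert_self _ _⟩
    intro v
    rw [degree_insert_mk i j F hnm v]
    exact (even_addc _ _).2 (hpar v)
  · intro E hE
    exact Finset.insert_erase (Finset.mem_filter.1 hE).2
  · intro F hF
    exact Finset.erase_insert (Finset.mem_filter.1 hF).2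
  · intro E hE
    exact wt_fact β g hsym i j E (Finset.mem_filter.1 hE).2

private lemma B2 (β : ℝ) (g : Fin N → Fin N → ℝ) (i j : Fin N) (hij : i ≠ j) :
    ∑ E ∈ ((pairs N).powerset.filter
        (fun E => ∀ v, Even (degree E v + (if v = i ∨ v = j then 1 else 0)))).filter
        (fun E => mkEdge i j ∉ E), wt β g E
      = ∑ F ∈ ((pairs N).powerset.filter
            (fun E => ∀ v, Even (degree E v))).filter (fun F => mkEdge i j ∈ F),
          wt β g (F.erase (mkEdge i j)) := by
  refine Finset.sum_bij' (fun E _ => insert (mkEdge i j) E) (fun F _ => F.erase (mkEdge i j))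
    ?_ ?_ ?_ ?_ ?_
  · intro E hE
    simp only [Finset.mem_filter, Finset.mem_powerset] at hE ⊢
    obtain ⟨⟨hsub, hpar⟩, hnm⟩ := hE
    refine ⟨⟨Finset.insert_subset (mkEdge_mem_pairs i j hij) hsub, ?_⟩,
      Finset.mem_insert_self _ _⟩
    intro v
    rw [degree_insert_mk i j E hnm v]
    exact hpar v
  · intro F hF
    simp only [Finset.mem_filter, Finset.mem_powerset] at hF ⊢
    obtain ⟨⟨hsub, hpar⟩, hmem⟩ := hF
    refine ⟨⟨(Finset.erase_subset _ _).trans hsub, ?_⟩, Finset.notMem_erase _ _⟩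
    intro v
    have hdeg := degree_insert_mk i j (F.erase (mkEdge i j)) (Finset.notMem_erase _ _) v
    rw [Finset.insert_erase hmem] at hdeg
    rw [← hdeg]
    exact hpar v
  · intro E hE
    exact Finset.erase_insert (Finset.mem_filter.1 hE).2
  · intro F hF
    exact Finset.insert_erase (Finset.mem_filter.1 hF).2
  · intro E hE
    rw [Finset.erase_insert (Finset.mem_filter.1 hE).2]

private lemma ZO_eq (β : ℝ) (g : Fin N → Fin N → ℝ) (hsym : ∀ i j, g j i = g i j)
    (i j : Fin N) (hij : i ≠ j) :
    ∑ E ∈ (pairs N).powerset.filter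
        (fun E => ∀ v, Even (degree E v + (if v = i ∨ v = j then 1 else 0))), wt β g E
      = Real.tanh (β * g i j) *
          (∑ F ∈ ((pairs N).powerset.filter
              (fun E => ∀ v, Even (degree E v))).filter (fun F => mkEdge i j ∉ F), wt β g F) +
        ∑ F ∈ ((pairs N).powerset.filter
            (fun E => ∀ v, Even (degree E v))).filter (fun F => mkEdge i j ∈ F),
          wt β g (F.erase (mkEdge i j)) := by
  rw [← Finset.sum_filter_add_sum_filter_not _ (fun E => mkEdge i j ∈ E) (wt β g),
    B1 β g hsym i j hij, B2 β g i j hij, ← Finset.mul_sum]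

private lemma ZC_eq (β : ℝ) (g : Fin N → Fin N → ℝ) (hsym : ∀ i j, g j i = g i j)
    (i j : Fin N) :
    ∑ E ∈ (pairs N).powerset.filter (fun E => ∀ v, Even (degree E v)), wt β g E
      = Real.tanh (β * g i j) *
          (∑ F ∈ ((pairs N).powerset.filter
              (fun E => ∀ v, Even (degree E v))).filter (fun F => mkEdge i j ∈ F),
            wt β g (F.erase (mkEdge i j))) +
        ∑ F ∈ ((pairs N).powerset.filter
            (fun E => ∀ v, Even (degree E v))).filter (fun F => mkEdge i j ∉ F), wt β g F := by
  rw [← Finset.sum_filter_add_sum_filter_not _ (fun E => mkEdge i j ∈ E) (wt β g),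
    Finset.mul_sum]
  congr 1
  exact Finset.sum_congr rfl fun F hF => wt_fact β g hsym i j F (Finset.mem_filter.1 hF).2

private lemma ZC_pos (β : ℝ) (g : Fin N → Fin N → ℝ) :
    0 < ∑ E ∈ (pairs N).powerset.filter (fun E => ∀ v, Even (degree E v)), wt β g E := by
  have hKpos : (0:ℝ) < (∏ e ∈ pairs N, Real.cosh (β * g e.1 e.2)) * 2 ^ N :=
    mul_pos (Finset.prod_pos fun e _ => Real.cosh_pos _) (by positivity)
  have h := denom_pos β g
  rw [denom_expand β g] at h
  rcases mul_pos_iff.1 h with ⟨_, h2⟩ | ⟨h1, _⟩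
  · exact h2
  · exact absurd hKpos (not_lt.2 h1.le)

private instance : DecidablePred (IsGraph (N := N)) :=
  fun E => decidable_of_iff (∀ e ∈ E, e.1 < e.2) Iff.rfl

private instance : DecidablePred (IsClosed (N := N)) :=
  fun E => decidable_of_iff (IsGraph E ∧ ∀ v, Even (degree E v)) Iff.rfl

private lemma isClosed_iff (E : Finset (Edge N)) :
    IsClosed E ↔ E ∈ (pairs N).powerset ∧ ∀ v, Even (degree E v) := by
  rw [IsClosed, Finset.mem_powerset]
  constructor
  · rintro ⟨h1, h2⟩
    exact ⟨fun e he => (mem_pairs e).2 (h1 e he), h2⟩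
  · rintro ⟨h1, h2⟩
    exact ⟨fun e he => (mem_pairs e).1 (h1 he), h2⟩

private lemma closed_filter_eq :
    (Finset.univ.filter fun E : Finset (Edge N) => IsClosed E) =
      (pairs N).powerset.filter (fun E => ∀ v, Even (degree E v)) := by
  ext E
  simp only [Finset.mem_filter, Finset.mem_univ, true_and]
  exact isClosed_iff E

private lemma closed_mk_filter_eq (i j : Fin N) :
    (Finset.univ.filter fun E : Finset (Edge N) => IsClosed E ∧ mkEdge i j ∈ E) =
      ((pairs N).powerset.filter (fun E => ∀ v, Even (degree E v))).filter
        (fun E => mkEdge i j ∈ E) := by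
  ext E
  simp only [Finset.mem_filter, Finset.mem_univ, true_and]
  rw [isClosed_iff E]

private lemma offdiag_eq (β : ℝ) (g : Fin N → Fin N → ℝ) (hsym : ∀ i j, g j i = g i j)
    (i j : Fin N) (hij : i ≠ j) :
    Mmat β g i j =
      Real.tanh (β * g i j) +
        (1 - Real.tanh (β * g i j) ^ 2) *
          (∑ᶠ E ∈ {E : Finset (Edge N) | IsClosed E ∧ mkEdge i j ∈ E},
              ∏ e ∈ E.erase (mkEdge i j), Real.tanh (β * g e.1 e.2)) /
            ∑ᶠ E ∈ {E : Finset (Edge N) | IsClosed E}, wt β g E := by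
  classical
  have hKpos : (0:ℝ) < (∏ e ∈ pairs N, Real.cosh (β * g e.1 e.2)) * 2 ^ N :=
    mul_pos (Finset.prod_pos fun e _ => Real.cosh_pos _) (by positivity)
  have hA : (∑ᶠ E ∈ {E : Finset (Edge N) | IsClosed E ∧ mkEdge i j ∈ E},
      ∏ e ∈ E.erase (mkEdge i j), Real.tanh (β * g e.1 e.2)) =
      ∑ F ∈ ((pairs N).powerset.filter
          (fun E => ∀ v, Even (degree E v))).filter (fun F => mkEdge i j ∈ F),
        wt β g (F.erase (mkEdge i j)) := by
    rw [finsum_mem_setOf (fun E => IsClosed E ∧ mkEdge i j ∈ E)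
      (fun E => ∏ e ∈ E.erase (mkEdge i j), Real.tanh (β * g e.1 e.2)),
      closed_mk_filter_eq i j]
    rfl
  have hZ : (∑ᶠ E ∈ {E : Finset (Edge N) | IsClosed E}, wt β g E) =
      ∑ E ∈ (pairs N).powerset.filter (fun E => ∀ v, Even (degree E v)), wt β g E := by
    rw [finsum_mem_setOf (fun E => IsClosed E) (wt β g), closed_filter_eq]
  have hM : Mmat β g i j =
      (∑ E ∈ (pairs N).powerset.filter
          (fun E => ∀ v, Even (degree E v + (if v = i ∨ v = j then 1 else 0))), wt β g E) /
        ∑ E ∈ (pairs N).powerset.filter (fun E => ∀ v, Even (degree E v)), wt β g E := by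
    rw [Mmat, Matrix.of_apply, gibbs]
    have hnum : (∑ s : Fin N → Bool,
        ((fun σ : Fin N → ℝ => σ i * σ j) fun v => spin (s v)) *
          Real.exp (hamil β g fun v => spin (s v))) =
        ((∏ e ∈ pairs N, Real.cosh (β * g e.1 e.2)) * 2 ^ N) *
          ∑ E ∈ (pairs N).powerset.filter
            (fun E => ∀ v, Even (degree E v + (if v = i ∨ v = j then 1 else 0))), wt β g E := by
      rw [← numer_expand β g i j hij]
    rw [hnum, denom_expand β g, mul_div_mul_left _ _ (ne_of_gt hKpos)]
  rw [hM, hA, hZ, ZO_eq β g hsym i j hij, ZC_eq β g hsym i j]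
  have hpos := ZC_pos β g (N := N)
  rw [ZC_eq β g hsym i j] at hpos
  set t := Real.tanh (β * g i j)
  set a := ∑ F ∈ ((pairs N).powerset.filter
      (fun E => ∀ v, Even (degree E v))).filter (fun F => mkEdge i j ∈ F),
    wt β g (F.erase (mkEdge i j))
  set b := ∑ F ∈ ((pairs N).powerset.filter
      (fun E => ∀ v, Even (degree E v))).filter (fun F => mkEdge i j ∉ F), wt β g F
  field_simp
  ring

end Main

/-- graphical representation of the two point function:
`⟨σ_i σ_j⟩ = tanh(β g_{ij}) + (1 - tanh²(β g_{ij})) Ẑ_N⁻¹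
  ∑_{γ ∈ Γ_sc, {i,j} ∈ γ} ∏_{e ∈ γ, e ≠ {i,j}} tanh(β g_e)` for `i ≠ j`,
and `⟨σ_i σ_i⟩ = 1`. -/
theorem two_point_graphical_representation (N : ℕ) (β : ℝ) (g : Fin N → Fin N → ℝ)
    (hsym : ∀ i j, g j i = g i j) (hdiag : ∀ i, g i i = 0) :
    (∀ i j : Fin N, i ≠ j →
      Mmat β g i j =
        Real.tanh (β * g i j) +
          (1 - Real.tanh (β * g i j) ^ 2) *
            (∑ᶠ E ∈ {E : Finset (Edge N) | IsClosed E ∧ mkEdge i j ∈ E},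
                ∏ e ∈ E.erase (mkEdge i j), Real.tanh (β * g e.1 e.2)) /
              ∑ᶠ E ∈ {E : Finset (Edge N) | IsClosed E}, wt β g E) ∧
    ∀ i : Fin N, Mmat β g i i = 1 :=
  ⟨fun i j hij => offdiag_eq β g hsym i j hij, fun i => diag_one β g i⟩

end SK
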